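/- If (X,ν) is a contractive G-space and (Y,η) is any G-space, then the projection pr_Y : (X × Y, ν × η) → (Y,η), where X × Y carries the diagonal G-action, is relatively contractive. -/

import Mathlib

open MeasureTheory Pointwise

/-- If `(X,ν)` is a contractive `G`-space and `(Y,η)` any `G`-space, then the
projection `(X × Y, ν × η) → (Y, η)` (diagonal action) is relatively contractive:
its disintegration is `D(y) = ν × δ_y` with conjugates `g⁻¹ • (ν × δ_{g•y})`. -/
theorem product_projection_relContractive
    {G X Y : Type*} [Group G] [MeasurableSpace X] [MeasurableSpace Y]
    [MulAction G X] [MulAction G Y]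
    (ν : Measure X) (η : Measure Y) [IsProbabilityMeasure ν] [IsProbabilityMeasure η]
    (hmX : ∀ g : G, Measurable (fun x : X => g • x))
    (hmY : ∀ g : G, Measurable (fun y : Y => g • y))
    (hqν : ∀ g : G, Measure.map (fun x : X => g • x) ν ≪ ν)
    (hqη : ∀ g : G, Measure.map (fun y : Y => g • y) η ≪ η)
    (hcon : ∀ B : Set X, MeasurableSet B → 0 < ν B → (⨆ g : G, ν (g • B)) = 1) :
    ∀ᵐ y ∂η, ∀ B : Set (X × Y), MeasurableSet B →
      0 < (ν.prod (Measure.dirac y)) B →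
      (⨆ g : G, (Measure.map (fun p : X × Y => g⁻¹ • p)
        (ν.prod (Measure.dirac (g • y)))) B) = 1 := by
  refine Filter.Eventually.of_forall fun y B hB hpos => ?_
  -- the slice of `B` at `y`
  set S : Set X := (fun x => (x, y)) ⁻¹' B with hS
  have hmkS : Measurable fun x : X => (x, y) := measurable_id.prodMk measurable_const
  have hSmeas : MeasurableSet S := hmkS hB
  have hposS : 0 < ν S := by
    rwa [Measure.prod_dirac, Measure.map_apply hmkS hB] at hpos
  have key : ∀ g : G,
      (Measure.map (fun p : X × Y => g⁻¹ • p) (ν.prod (Measure.dirac (g • y)))) B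
        = ν (g • S) := by
    intro g
    have hmsmul : Measurable fun p : X × Y => g⁻¹ • p :=
      ((hmX g⁻¹).comp measurable_fst).prodMk ((hmY g⁻¹).comp measurable_snd)
    have hmk : Measurable fun x : X => (x, g • y) := measurable_id.prodMk measurable_const
    rw [Measure.prod_dirac, Measure.map_map hmsmul hmk,
      Measure.map_apply (hmsmul.comp hmk) hB]
    congr 1
    ext x
    simp only [Set.mem_preimage, Function.comp_apply]
    have : g⁻¹ • ((x, g • y) : X × Y) = (g⁻¹ • x, y) := by
      simp [Prod.smul_def, inv_smul_smul]
    rw [this]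
    constructor
    · intro hx
      exact ⟨g⁻¹ • x, hx, by simp⟩
    · rintro ⟨x', hx', rfl⟩
      simpa [inv_smul_smul, hS] using hx'
  simp_rw [key]
  exact hcon S hSmeas hposS
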